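/- Let G1 and G2 be two DAGs over the same finite set of variables with identical parent sets for every variable in a set S, and suppose a strictly positive joint distribution P factorizes according to both G1 and G2. Then the interventional query P(Q = q | do(R_j = r_j for j ∈ S)) computed via the truncated factorization of G1 equals the one computed via the truncated factorization of G2. -/
import Mathlib

set_option linter.unusedSectionVars false
set_option maxHeartbeats 1000000

open Finset

section Aux

variable {n : ℕ} {X : Fin n → Type} [∀ i, Fintype (X i)] [∀ i, DecidableEq (X i)]
  [∀ i, Nonempty (X i)]

/-- Marginal of `g` over coordinates outside `E`, evaluated at `a`. -/
noncomputable def marg (g : (∀ j, X j) → ℝ) (E : Finset (Fin n)) (a : ∀ j, X j) : ℝ :=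
  ∑ b : ∀ j, X j, if ∀ t ∈ E, b t = a t then g b else 0

lemma marg_split (g : (∀ j, X j) → ℝ) (E : Finset (Fin n)) (a : ∀ j, X j)
    (d : Fin n) (hd : d ∉ E) :
    marg g E a = ∑ v : X d, marg g (insert d E) (Function.update a d v) := by
  unfold marg
  rw [Finset.sum_comm]
  refine Finset.sum_congr rfl fun b _ => ?_
  have hiff : ∀ v : X d,
      (∀ t ∈ insert d E, b t = Function.update a d v t) ↔
        (b d = v ∧ ∀ t ∈ E, b t = a t) := by
    intro v
    constructor
    · intro h
      refine ⟨by simpa using h d (mem_insert_self d E), fun t ht => ?_⟩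
      have := h t (mem_insert_of_mem ht)
      rwa [Function.update_of_ne (fun hte => hd (by rwa [hte] at ht))] at this
    · rintro ⟨h1, h2⟩ t ht
      rcases mem_insert.mp ht with rfl | ht'
      · simpa using h1
      · rw [Function.update_of_ne (fun hte => hd (by rwa [hte] at ht'))]
        exact h2 t ht'
  simp only [hiff, ite_and]
  simp

lemma marg_univ (g : (∀ j, X j) → ℝ) (a : ∀ j, X j) :
    marg g Finset.univ a = g a := by
  unfold marg
  rw [Finset.sum_eq_single a]
  · simp
  · intro b _ hb
    rw [if_neg]
    intro h
    exact hb (funext fun t => h t (mem_univ t))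
  · simp

lemma marg_prod (pa : Fin n → Finset (Fin n)) (K : ∀ _ : Fin n, (∀ j, X j) → ℝ)
    (hacyc : WellFounded fun j i : Fin n => j ∈ pa i)
    (hdep : ∀ i (a b : ∀ j, X j), (∀ j ∈ insert i (pa i), a j = b j) → K i a = K i b)
    (hnorm : ∀ i (a : ∀ j, X j), ∑ v : X i, K i (Function.update a i v) = 1)
    (C : Finset (Fin n))
    (hC : ∀ k ∈ C, ∀ i, k ∈ pa i → i ∈ C) :
    ∀ a, marg (fun b => ∏ i, K i b) (Finset.univ \ C) a = ∏ i ∈ Finset.univ \ C, K i a := by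
  induction C using Finset.strongInduction with
  | _ C ih =>
    intro a
    rcases eq_or_ne C ∅ with rfl | hne
    · simpa using marg_univ (fun b => ∏ i, K i b) a
    · obtain ⟨c, hcC, hcmin⟩ := hacyc.has_min ↑C (by simpa [Finset.nonempty_iff_ne_empty] using hne)
      have hcmin' : ∀ k ∈ C, k ∉ pa c := fun k hk => hcmin k hk
      have hcC2 : c ∈ C := hcC
      have hcnot : c ∉ Finset.univ \ C := by simp [hcC2]
      have hset : insert c (Finset.univ \ C) = Finset.univ \ C.erase c := by
        ext x
        simp only [mem_insert, mem_sdiff, mem_univ, true_and, mem_erase]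
        constructor
        · rintro (rfl | hx) <;> tauto
        · intro hx
          by_cases hxc : x = c <;> tauto
      have hCe : ∀ k ∈ C.erase c, ∀ i, k ∈ pa i → i ∈ C.erase c := by
        intro k hk i hki
        have hkC := Finset.mem_of_mem_erase hk
        have hiC := hC k hkC i hki
        refine Finset.mem_erase.mpr ⟨?_, hiC⟩
        rintro rfl
        exact hcmin' k hkC hki
      have hsub : C.erase c ⊂ C := Finset.erase_ssubset hcC2
      rw [marg_split (fun b => ∏ i, K i b) (Finset.univ \ C) a c hcnot]
      calc ∑ v : X c, marg (fun b => ∏ i, K i b) (insert c (Finset.univ \ C))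
              (Function.update a c v)
          = ∑ v : X c, ∏ i ∈ Finset.univ \ C.erase c, K i (Function.update a c v) := by
            refine Finset.sum_congr rfl fun v _ => ?_
            rw [hset]
            exact ih (C.erase c) hsub hCe (Function.update a c v)
        _ = ∑ v : X c, K c (Function.update a c v) *
              ∏ i ∈ Finset.univ \ C, K i (Function.update a c v) := by
            refine Finset.sum_congr rfl fun v _ => ?_
            rw [← hset, Finset.prod_insert hcnot]
        _ = ∑ v : X c, K c (Function.update a c v) * ∏ i ∈ Finset.univ \ C, K i a := by
            refine Finset.sum_congr rfl fun v _ => ?_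
            congr 1
            refine Finset.prod_congr rfl fun i hi => ?_
            refine hdep i _ _ fun j hj => ?_
            have hjc : j ≠ c := by
              rintro rfl
              rcases Finset.mem_insert.mp hj with rfl | hjp
              · exact (Finset.mem_sdiff.mp hi).2 hcC2
              · exact (Finset.mem_sdiff.mp hi).2 (hC j hcC2 i hjp)
            rw [Function.update_of_ne hjc]
        _ = ∏ i ∈ Finset.univ \ C, K i a := by
            rw [← Finset.sum_mul, hnorm c a, one_mul]


lemma kernel_char (pa : Fin n → Finset (Fin n)) (K : ∀ _ : Fin n, (∀ j, X j) → ℝ)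
    (hacyc : WellFounded fun j i : Fin n => j ∈ pa i)
    (hdep : ∀ i (a b : ∀ j, X j), (∀ j ∈ insert i (pa i), a j = b j) → K i a = K i b)
    (hnorm : ∀ i (a : ∀ j, X j), ∑ v : X i, K i (Function.update a i v) = 1)
    (P : (∀ j, X j) → ℝ) (hfact : ∀ a, P a = ∏ i, K i a)
    (j : Fin n) (a : ∀ j, X j) :
    marg P (insert j (pa j)) a = K j a * marg P (pa j) a := by
  classical
  set rel : Fin n → Fin n → Prop := fun x y => x ∈ pa y with hrel
  have hnoTG : ∀ x, ¬ Relation.TransGen rel x x := fun x h =>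
    hacyc.transGen.asymmetric x x h h
  have hjj : j ∉ pa j := fun h => hnoTG j (Relation.TransGen.single h)
  set A : Finset (Fin n) :=
    Finset.univ.filter (fun i => Relation.ReflTransGen rel i j) with hA
  have hmem : ∀ i, i ∈ A ↔ Relation.ReflTransGen rel i j := by
    intro i; simp [hA]
  have hjA : j ∈ A := (hmem j).mpr Relation.ReflTransGen.refl
  have hpaA : ∀ i ∈ A, ∀ k ∈ pa i, k ∈ A := by
    intro i hi k hk
    exact (hmem k).mpr (Relation.ReflTransGen.head hk ((hmem i).mp hi))
  have hTsub : insert j (pa j) ⊆ A := by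
    intro t ht
    rcases Finset.mem_insert.mp ht with rfl | ht'
    · exact hjA
    · exact hpaA j hjA t ht'
  -- no child of j lies in A
  have hnochild : ∀ i ∈ A, j ∉ pa i := by
    intro i hi hj
    exact hnoTG j (Relation.TransGen.head' hj ((hmem i).mp hi))
  -- complement of A is closed under children
  have hCclosed : ∀ k ∈ Finset.univ \ A, ∀ i, k ∈ pa i → i ∈ Finset.univ \ A := by
    intro k hk i hki
    simp only [Finset.mem_sdiff, Finset.mem_univ, true_and] at hk ⊢
    intro hiA
    exact hk (hpaA i hiA k hki)
  have hAeq : Finset.univ \ (Finset.univ \ A) = A := by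
    simp [Finset.sdiff_sdiff_self_left]
  have hmargP : ∀ (E : Finset (Fin n)) (x : ∀ j, X j),
      marg P E x = marg (fun b => ∏ i, K i b) E x := by
    intro E x
    unfold marg
    exact Finset.sum_congr rfl fun b _ => by rw [hfact b]
  have hmargA : ∀ x, marg P A x = ∏ i ∈ A, K i x := by
    intro x
    rw [hmargP]
    have := marg_prod pa K hacyc hdep hnorm (Finset.univ \ A) hCclosed x
    rwa [hAeq] at this
  -- invariance: marg over A \ D (for D ⊆ A \ insert j (pa j)) times K j is symmetric
  have hinv : ∀ D : Finset (Fin n), D ⊆ A \ insert j (pa j) →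
      ∀ (x : ∀ j, X j) (v : X j),
        marg P (A \ D) (Function.update x j v) * K j x
          = marg P (A \ D) x * K j (Function.update x j v) := by
    intro D
    induction D using Finset.induction_on with
    | empty =>
      intro _ x v
      simp only [Finset.sdiff_empty]
      rw [hmargA, hmargA]
      have hxj : x = Function.update x j (x j) := (Function.update_eq_self j x).symm
      have hprod : ∀ w : X j, ∏ i ∈ A, K i (Function.update x j w)
          = K j (Function.update x j w) * ∏ i ∈ A.erase j, K i x := by
        intro w
        rw [← Finset.mul_prod_erase A _ hjA]
        congr 1
        refine Finset.prod_congr rfl fun i hi => ?_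
        refine hdep i _ _ fun t ht => ?_
        have htj : t ≠ j := by
          rintro rfl
          rcases Finset.mem_insert.mp ht with rfl | htp
          · exact (Finset.mem_erase.mp hi).1 rfl
          · exact hnochild i (Finset.mem_of_mem_erase hi) htp
        rw [Function.update_of_ne htj]
      have hx : ∏ i ∈ A, K i x = K j x * ∏ i ∈ A.erase j, K i x := by
        conv_lhs => rw [hxj]
        rw [hprod (x j), ← hxj]
      rw [hprod v, hx]; ring
    | @insert d D hdD ih =>
      intro hsub x v
      have hd : d ∈ A \ insert j (pa j) := hsub (Finset.mem_insert_self d D)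
      have hdA : d ∈ A := (Finset.mem_sdiff.mp hd).1
      have hdT : d ∉ insert j (pa j) := (Finset.mem_sdiff.mp hd).2
      have hdj : d ≠ j := fun h => hdT (h ▸ Finset.mem_insert_self j (pa j))
      have hDsub : D ⊆ A \ insert j (pa j) := fun t ht => hsub (Finset.mem_insert_of_mem ht)
      have hdnot : d ∉ A \ insert d D := by simp
      have hins : insert d (A \ insert d D) = A \ D := by
        ext t
        by_cases htd : t = d
        · subst htd; simp [hdA, hdD]
        · simp [Finset.mem_insert, Finset.mem_sdiff, htd]
      have hKd : ∀ (y : ∀ j, X j) (w : X d), K j (Function.update y d w) = K j y := by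
        intro y w
        refine hdep j _ _ fun t ht => ?_
        have htd : t ≠ d := fun h => hdT (h ▸ ht)
        rw [Function.update_of_ne htd]
      rw [marg_split P (A \ insert d D) (Function.update x j v) d hdnot,
          marg_split P (A \ insert d D) x d hdnot, hins,
          Finset.sum_mul, Finset.sum_mul]
      refine Finset.sum_congr rfl fun w _ => ?_
      rw [Function.update_comm (Ne.symm hdj)]
      have := ih hDsub (Function.update x d w) v
      calc marg P (A \ D) (Function.update (Function.update x d w) j v) * K j x
          = marg P (A \ D) (Function.update (Function.update x d w) j v)
              * K j (Function.update x d w) := by rw [hKd x w]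
        _ = marg P (A \ D) (Function.update x d w)
              * K j (Function.update (Function.update x d w) j v) := this
        _ = marg P (A \ D) (Function.update x d w) * K j (Function.update x j v) := by
              rw [Function.update_comm hdj, hKd (Function.update x j v) w]
  -- apply with D = A \ insert j (pa j)
  have hmain : ∀ v : X j,
      marg P (insert j (pa j)) (Function.update a j v) * K j a
        = marg P (insert j (pa j)) a * K j (Function.update a j v) := by
    intro v
    have := hinv (A \ insert j (pa j)) (Finset.Subset.refl _) a v
    have hAT : A \ (A \ insert j (pa j)) = insert j (pa j) := by
      rw [Finset.sdiff_sdiff_self_left, Finset.inter_eq_right.mpr hTsub]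
    rwa [hAT] at this
  have hsum := marg_split P (pa j) a j hjj
  calc marg P (insert j (pa j)) a
      = marg P (insert j (pa j)) a * ∑ v : X j, K j (Function.update a j v) := by
        rw [hnorm j a, mul_one]
    _ = ∑ v : X j, marg P (insert j (pa j)) a * K j (Function.update a j v) := by
        rw [Finset.mul_sum]
    _ = ∑ v : X j, marg P (insert j (pa j)) (Function.update a j v) * K j a := by
        exact Finset.sum_congr rfl fun v _ => (hmain v).symm
    _ = K j a * marg P (pa j) a := by
        rw [← Finset.sum_mul, ← hsum, mul_comm]


end Aux

/-- If a strictly positive joint distribution `P` factorizes according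
to two DAGs `pa1` and `pa2` (with conditional kernels `K1`, `K2`), and the parent
sets of all intervened variables (those in `S`) agree in the two DAGs, then the
interventional query `P(Q = q | do(R_j = r_j, j ∈ S))` computed via the truncated
factorization of the first DAG equals the one computed via the second DAG. -/
theorem stmt1
    {n : ℕ} (X : Fin n → Type) [∀ i, Fintype (X i)] [∀ i, DecidableEq (X i)]
    [∀ i, Nonempty (X i)]
    (pa1 pa2 : Fin n → Finset (Fin n))
    (hacyc1 : WellFounded fun j i : Fin n => j ∈ pa1 i)
    (hacyc2 : WellFounded fun j i : Fin n => j ∈ pa2 i)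
    (K1 K2 : ∀ _ : Fin n, (∀ j, X j) → ℝ)
    (hdep1 : ∀ i (a b : ∀ j, X j), (∀ j ∈ insert i (pa1 i), a j = b j) → K1 i a = K1 i b)
    (hdep2 : ∀ i (a b : ∀ j, X j), (∀ j ∈ insert i (pa2 i), a j = b j) → K2 i a = K2 i b)
    (hpos1 : ∀ i a, 0 < K1 i a) (hpos2 : ∀ i a, 0 < K2 i a)
    (hnorm1 : ∀ i (a : ∀ j, X j), ∑ v : X i, K1 i (Function.update a i v) = 1)
    (hnorm2 : ∀ i (a : ∀ j, X j), ∑ v : X i, K2 i (Function.update a i v) = 1)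
    (P : (∀ j, X j) → ℝ)
    (hfact1 : ∀ a, P a = ∏ i, K1 i a)
    (hfact2 : ∀ a, P a = ∏ i, K2 i a)
    (S : Finset (Fin n)) (r : ∀ j : Fin n, X j)
    (hpar : ∀ j ∈ S, pa1 j = pa2 j)
    (q0 : Fin n) (hq0 : q0 ∉ S) (q : X q0) :
    (∑ a : ∀ j, X j,
        if a q0 = q ∧ ∀ j ∈ S, a j = r j then ∏ i ∈ Finset.univ \ S, K1 i a else 0)
      =
    (∑ a : ∀ j, X j,
        if a q0 = q ∧ ∀ j ∈ S, a j = r j then ∏ i ∈ Finset.univ \ S, K2 i a else 0) := by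
  classical
  have hKeq : ∀ j ∈ S, ∀ a : ∀ t, X t, K1 j a = K2 j a := by
    intro j hj a
    have h1 := kernel_char pa1 K1 hacyc1 hdep1 hnorm1 P hfact1 j a
    have h2 := kernel_char pa2 K2 hacyc2 hdep2 hnorm2 P hfact2 j a
    rw [hpar j hj] at h1
    have hpos : 0 < marg P (pa2 j) a := by
      refine Finset.sum_pos' (fun b _ => ?_) ⟨a, Finset.mem_univ a, ?_⟩
      · split_ifs
        · rw [hfact1 b]; exact le_of_lt (Finset.prod_pos fun i _ => hpos1 i b)
        · exact le_rfl
      · rw [if_pos (fun t _ => rfl), hfact1 a]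
        exact Finset.prod_pos fun i _ => hpos1 i a
    have := h1.symm.trans h2
    exact mul_right_cancel₀ (ne_of_gt hpos) this
  refine Finset.sum_congr rfl fun a _ => ?_
  split_ifs with h
  · have hS : ∏ j ∈ S, K1 j a = ∏ j ∈ S, K2 j a :=
      Finset.prod_congr rfl fun j hj => hKeq j hj a
    have h1 : (∏ i ∈ Finset.univ \ S, K1 i a) * ∏ j ∈ S, K1 j a = ∏ i, K1 i a :=
      Finset.prod_sdiff (Finset.subset_univ S)
    have h2 : (∏ i ∈ Finset.univ \ S, K2 i a) * ∏ j ∈ S, K2 j a = ∏ i, K2 i a :=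
      Finset.prod_sdiff (Finset.subset_univ S)
    have hP : (∏ i, K1 i a) = ∏ i, K2 i a := by rw [← hfact1 a, hfact2 a]
    have hSpos : (0:ℝ) < ∏ j ∈ S, K2 j a := Finset.prod_pos fun j _ => hpos2 j a
    have : (∏ i ∈ Finset.univ \ S, K1 i a) * ∏ j ∈ S, K2 j a
        = (∏ i ∈ Finset.univ \ S, K2 i a) * ∏ j ∈ S, K2 j a := by
      rw [h2, ← hP, ← h1, hS]
    exact mul_right_cancel₀ (ne_of_gt hSpos) this
  · rfl
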